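/- Vanishing Bregman residuals of BPRS under relative smoothness (Theorem A.1): Under the assumptions that f and g are convex differentiable and L-relatively smooth with respect to a Legendre function h, that F = f + g attains its minimum F(x*) = F*, and that 0 < γ ≤ 1/L, the sequences generated by y^k := argmin_y { f(x^k) + ⟨∇f(x^k), y − x^k⟩ + g(y) + (1/γ) D_h(y, x^k) } and x^{k+1} := argmin_x { g(y^k) + ⟨∇g(y^k), x − y^k⟩ + f(x) + (1/γ) D_h(x, y^k) } satisfy (1/γ) Σ_{k=0}^N ( D_h(x^k, y^k) + D_h(y^k, x^{k+1}) ) ≤ F(x^0) − F* for every N, and consequently lim_{k→∞} D_h(x^k, y^k) = 0 and lim_{k→∞} D_h(y^k, x^{k+1}) = 0. -/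

import Mathlib

open Filter Finset

lemma convex_grad_le {E : Type*} [NormedAddCommGroup E] [NormedSpace ℝ E] {φ : E → ℝ}
    (hc : ConvexOn ℝ Set.univ φ) (hd : Differentiable ℝ φ) (a b : E) :
    φ a + fderiv ℝ φ a (b - a) ≤ φ b := by
  set v := b - a with hv
  have hline : HasDerivAt (fun t : ℝ => a + t • v) v 0 := by
    simpa using ((hasDerivAt_id (0:ℝ)).smul_const v).const_add a
  have hψ : HasDerivAt (fun t : ℝ => φ (a + t • v)) (fderiv ℝ φ a v) 0 := by
    have := (hd a).hasFDerivAt.comp_hasDerivAt_of_eq 0 hline (by simp)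
    exact this
  have hcψ : ConvexOn ℝ Set.univ (fun t : ℝ => φ (a + t • v)) := by
    have h1 := hc.comp_affineMap (AffineMap.lineMap a b)
    have h2 : (φ ∘ (AffineMap.lineMap a b : ℝ →ᵃ[ℝ] E)) = fun t : ℝ => φ (a + t • v) := by
      funext t
      simp [AffineMap.lineMap_apply, hv, add_comm]
    rw [h2, Set.preimage_univ] at h1
    exact h1
  have hslope := hcψ.le_slope_of_hasDerivAt (Set.mem_univ (0:ℝ)) (Set.mem_univ 1) one_pos hψ
  rw [slope_def_field] at hslope
  simp only [zero_smul, add_zero, one_smul, sub_zero, div_one] at hslope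
  have : a + v = b := by rw [hv]; abel
  rw [this] at hslope
  linarith

noncomputable def lmapAux (n : ℕ) (c : Fin n → ℝ) : (Fin n → ℝ) →L[ℝ] ℝ :=
  ∑ i, c i • (ContinuousLinearMap.proj i : (Fin n → ℝ) →L[ℝ] ℝ)

lemma lmapAux_apply (n : ℕ) (c z : Fin n → ℝ) : lmapAux n c z = ∑ i, c i * z i := by
  simp [lmapAux]

lemma argmin_grad (n : ℕ) (c d : Fin n → ℝ) (s : ℝ) (g h : (Fin n → ℝ) → ℝ)
    (hgd : Differentiable ℝ g) (hhd : Differentiable ℝ h) (m : Fin n → ℝ)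
    (hmin : ∀ z, (∑ i, c i * m i) + g m + s * (h m - ∑ i, d i * m i)
        ≤ (∑ i, c i * z i) + g z + s * (h z - ∑ i, d i * z i)) (q : Fin n → ℝ) :
    (∑ i, c i * q i) + (fderiv ℝ g m) q + s * ((fderiv ℝ h m) q - ∑ i, d i * q i) = 0 := by
  set φ : (Fin n → ℝ) → ℝ := fun z => lmapAux n c z + g z + s * (h z - lmapAux n d z) with hφ
  have hder : HasFDerivAt φ
      (lmapAux n c + fderiv ℝ g m + s • (fderiv ℝ h m - lmapAux n d)) m := by
    have h1 := ((lmapAux n c).hasFDerivAt (x := m)).add (hgd m).hasFDerivAt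
    have h2 := (((hhd m).hasFDerivAt).sub ((lmapAux n d).hasFDerivAt (x := m))).const_mul s
    exact h1.add h2
  have hmin' : IsLocalMin φ m := Filter.Eventually.of_forall (fun z => by
    simp only [hφ, lmapAux_apply]
    exact hmin z)
  have h0 := hmin'.fderiv_eq_zero
  rw [hder.fderiv] at h0
  have h3 := congrArg (fun (T : (Fin n → ℝ) →L[ℝ] ℝ) => T q) h0
  simpa [lmapAux_apply, ContinuousLinearMap.add_apply, ContinuousLinearMap.smul_apply,
    ContinuousLinearMap.sub_apply, smul_eq_mul] using h3

/-- **Vanishing Bregman residuals of BPRS under relative smoothness (Theorem A.1).**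
Let `f`, `g` be convex differentiable and `L`-relatively smooth with respect to a
Legendre function `h`, let `F = f + g` attain its minimum at `x*`, and `0 < γ ≤ 1/L`.
Then the BPRS sequences satisfy
`(1/γ) Σ_{k=0}^N (D(x^k, y^k) + D(y^k, x^{k+1})) ≤ F(x^0) - F(x*)` for every `N`,
and hence `D(x^k, y^k) → 0` and `D(y^k, x^{k+1}) → 0`. -/
theorem bprs_vanishing_residuals (n : ℕ)
    (h : (Fin n → ℝ) → ℝ) (gh : (Fin n → ℝ) → (Fin n → ℝ))
    (hconv : StrictConvexOn ℝ Set.univ h)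
    (hdiffh : Differentiable ℝ h)
    (hgradh : ∀ p q, (fderiv ℝ h p) q = ∑ i, gh p i * q i)
    (D : (Fin n → ℝ) → (Fin n → ℝ) → ℝ)
    (hD : ∀ p q, D p q = h p - h q - ∑ i, gh q i * (p i - q i))
    (f g : (Fin n → ℝ) → ℝ) (gf gg : (Fin n → ℝ) → (Fin n → ℝ))
    (hfconv : ConvexOn ℝ Set.univ f) (hgconv : ConvexOn ℝ Set.univ g)
    (hfd : Differentiable ℝ f)
    (hfgrad : ∀ p q, (fderiv ℝ f p) q = ∑ i, gf p i * q i)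
    (hgd : Differentiable ℝ g)
    (hggrad : ∀ p q, (fderiv ℝ g p) q = ∑ i, gg p i * q i)
    (L γ : ℝ) (hL : 0 < L) (hγ0 : 0 < γ) (hγL : γ ≤ 1 / L)
    (hfsmooth : ∀ a b, f a ≤ f b + (∑ i, gf b i * (a i - b i)) + L * D a b)
    (hgsmooth : ∀ a b, g a ≤ g b + (∑ i, gg b i * (a i - b i)) + L * D a b)
    (x y : ℕ → Fin n → ℝ)
    (hy : ∀ k y',
      f (x k) + (∑ i, gf (x k) i * (y k i - x k i)) + g (y k) + (1/γ) * D (y k) (x k)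
        ≤ f (x k) + (∑ i, gf (x k) i * (y' i - x k i)) + g y' + (1/γ) * D y' (x k))
    (hx : ∀ k x',
      g (y k) + (∑ i, gg (y k) i * (x (k+1) i - y k i)) + f (x (k+1))
          + (1/γ) * D (x (k+1)) (y k)
        ≤ g (y k) + (∑ i, gg (y k) i * (x' i - y k i)) + f x' + (1/γ) * D x' (y k))
    (xstar : Fin n → ℝ) (hstar : ∀ p, f xstar + g xstar ≤ f p + g p) :
    (∀ N : ℕ, (1/γ) * ∑ k ∈ Finset.range (N+1), (D (x k) (y k) + D (y k) (x (k+1)))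
        ≤ (f (x 0) + g (x 0)) - (f xstar + g xstar))
    ∧ Filter.Tendsto (fun k => D (x k) (y k)) Filter.atTop (nhds 0)
    ∧ Filter.Tendsto (fun k => D (y k) (x (k+1))) Filter.atTop (nhds 0) := by
  have expand : ∀ (c w v : Fin n → ℝ),
      (∑ i, c i * (w i - v i)) = (∑ i, c i * w i) - ∑ i, c i * v i := by
    intro c w v
    rw [← Finset.sum_sub_distrib]
    exact Finset.sum_congr rfl (fun i _ => by ring)
  -- nonnegativity of D
  have hDnn : ∀ p q, 0 ≤ D p q := by
    intro p q
    have h1 := convex_grad_le hconv.convexOn hdiffh q p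
    rw [hgradh] at h1
    have e : (∑ i, gh q i * (p - q) i) = ∑ i, gh q i * (p i - q i) := by
      exact Finset.sum_congr rfl (fun i _ => by simp [Pi.sub_apply])
    rw [e] at h1
    rw [hD]
    linarith
  -- gradient inequalities from convexity
  have hgineq : ∀ a b, g a + (∑ i, gg a i * (b i - a i)) ≤ g b := by
    intro a b
    have h1 := convex_grad_le hgconv hgd a b
    rw [hggrad] at h1
    have e : (∑ i, gg a i * (b - a) i) = ∑ i, gg a i * (b i - a i) :=
      Finset.sum_congr rfl (fun i _ => by simp [Pi.sub_apply])
    rw [e] at h1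
    exact h1
  have hfineq : ∀ a b, f a + (∑ i, gf a i * (b i - a i)) ≤ f b := by
    intro a b
    have h1 := convex_grad_le hfconv hfd a b
    rw [hfgrad] at h1
    have e : (∑ i, gf a i * (b - a) i) = ∑ i, gf a i * (b i - a i) :=
      Finset.sum_congr rfl (fun i _ => by simp [Pi.sub_apply])
    rw [e] at h1
    exact h1
  have hLγ : L ≤ 1/γ := by
    rw [le_div_iff₀ hγ0]
    calc L * γ ≤ L * (1/L) := by
          exact mul_le_mul_of_nonneg_left hγL hL.le
      _ = 1 := by field_simp
  -- key gradient identity for y-step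
  have key1 : ∀ (k : ℕ) (q : Fin n → ℝ), (∑ i, gf (x k) i * q i) + (∑ i, gg (y k) i * q i)
      + (1/γ) * ((∑ i, gh (y k) i * q i) - ∑ i, gh (x k) i * q i) = 0 := by
    intro k q
    have hmin : ∀ z, (∑ i, gf (x k) i * y k i) + g (y k)
        + (1/γ) * (h (y k) - ∑ i, gh (x k) i * y k i)
        ≤ (∑ i, gf (x k) i * z i) + g z + (1/γ) * (h z - ∑ i, gh (x k) i * z i) := by
      intro z
      have h1 := hy k z
      rw [hD (y k) (x k), hD z (x k), expand, expand, expand, expand] at h1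
      linarith
    have h2 := argmin_grad n (gf (x k)) (gh (x k)) (1/γ) g h hgd hdiffh (y k) hmin q
    rw [hggrad, hgradh] at h2
    exact h2
  -- key gradient identity for x-step
  have key2 : ∀ (k : ℕ) (q : Fin n → ℝ), (∑ i, gg (y k) i * q i) + (∑ i, gf (x (k+1)) i * q i)
      + (1/γ) * ((∑ i, gh (x (k+1)) i * q i) - ∑ i, gh (y k) i * q i) = 0 := by
    intro k q
    have hmin : ∀ z, (∑ i, gg (y k) i * x (k+1) i) + f (x (k+1))
        + (1/γ) * (h (x (k+1)) - ∑ i, gh (y k) i * x (k+1) i)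
        ≤ (∑ i, gg (y k) i * z i) + f z + (1/γ) * (h z - ∑ i, gh (y k) i * z i) := by
      intro z
      have h1 := hx k z
      rw [hD (x (k+1)) (y k), hD z (y k), expand, expand, expand, expand] at h1
      linarith
    have h2 := argmin_grad n (gg (y k)) (gh (y k)) (1/γ) f h hfd hdiffh (x (k+1)) hmin q
    rw [hfgrad, hgradh] at h2
    exact h2
  -- per-step decrease, y-step
  have d1 : ∀ k, (1/γ) * D (x k) (y k) ≤ (f (x k) + g (x k)) - (f (y k) + g (y k)) := by
    intro k
    have hkey := key1 k (x k - y k)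
    have esub : ∀ (c : Fin n → ℝ), (∑ i, c i * (x k - y k) i)
        = (∑ i, c i * x k i) - ∑ i, c i * y k i := by
      intro c
      rw [← expand]
      exact Finset.sum_congr rfl (fun i _ => by simp [Pi.sub_apply])
    rw [esub, esub, esub, esub] at hkey
    have hD1 := hD (x k) (y k)
    have hD2 := hD (y k) (x k)
    rw [expand] at hD1
    rw [expand] at hD2
    have e1 : (1/γ) * (D (x k) (y k) + D (y k) (x k))
        = ((∑ i, gf (x k) i * x k i) - ∑ i, gf (x k) i * y k i)
          + ((∑ i, gg (y k) i * x k i) - ∑ i, gg (y k) i * y k i) := by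
      linear_combination (1/γ) * hD1 + (1/γ) * hD2 - hkey
    have hgi := hgineq (y k) (x k)
    rw [expand] at hgi
    have hfs := hfsmooth (y k) (x k)
    rw [expand] at hfs
    have hnn := hDnn (y k) (x k)
    have hprod : 0 ≤ (1/γ - L) * D (y k) (x k) := mul_nonneg (by linarith) hnn
    nlinarith [e1, hgi, hfs, hprod]
  -- per-step decrease, x-step
  have d2 : ∀ k, (1/γ) * D (y k) (x (k+1))
      ≤ (f (y k) + g (y k)) - (f (x (k+1)) + g (x (k+1))) := by
    intro k
    have hkey := key2 k (y k - x (k+1))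
    have esub : ∀ (c : Fin n → ℝ), (∑ i, c i * (y k - x (k+1)) i)
        = (∑ i, c i * y k i) - ∑ i, c i * x (k+1) i := by
      intro c
      rw [← expand]
      exact Finset.sum_congr rfl (fun i _ => by simp [Pi.sub_apply])
    rw [esub, esub, esub, esub] at hkey
    have hD1 := hD (y k) (x (k+1))
    have hD2 := hD (x (k+1)) (y k)
    rw [expand] at hD1
    rw [expand] at hD2
    have e1 : (1/γ) * (D (y k) (x (k+1)) + D (x (k+1)) (y k))
        = ((∑ i, gg (y k) i * y k i) - ∑ i, gg (y k) i * x (k+1) i)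
          + ((∑ i, gf (x (k+1)) i * y k i) - ∑ i, gf (x (k+1)) i * x (k+1) i) := by
      linear_combination (1/γ) * hD1 + (1/γ) * hD2 - hkey
    have hfi := hfineq (x (k+1)) (y k)
    rw [expand] at hfi
    have hgs := hgsmooth (x (k+1)) (y k)
    rw [expand] at hgs
    have hnn := hDnn (x (k+1)) (y k)
    have hprod : 0 ≤ (1/γ - L) * D (x (k+1)) (y k) := mul_nonneg (by linarith) hnn
    nlinarith [e1, hfi, hgs, hprod]
  -- combined per-step decrease
  have dsum : ∀ k, (1/γ) * (D (x k) (y k) + D (y k) (x (k+1)))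
      ≤ (f (x k) + g (x k)) - (f (x (k+1)) + g (x (k+1))) := by
    intro k
    have := d1 k
    have := d2 k
    linarith
  -- Part 1
  have part1 : ∀ N : ℕ, (1/γ) * ∑ k ∈ Finset.range (N+1), (D (x k) (y k) + D (y k) (x (k+1)))
      ≤ (f (x 0) + g (x 0)) - (f xstar + g xstar) := by
    intro N
    rw [Finset.mul_sum]
    have htel : ∑ k ∈ Finset.range (N+1),
        ((f (x k) + g (x k)) - (f (x (k+1)) + g (x (k+1))))
        = (f (x 0) + g (x 0)) - (f (x (N+1)) + g (x (N+1))) :=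
      Finset.sum_range_sub' (fun k => f (x k) + g (x k)) (N+1)
    have hsum : ∑ k ∈ Finset.range (N+1), (1/γ) * (D (x k) (y k) + D (y k) (x (k+1)))
        ≤ ∑ k ∈ Finset.range (N+1),
          ((f (x k) + g (x k)) - (f (x (k+1)) + g (x (k+1)))) :=
      Finset.sum_le_sum (fun k _ => dsum k)
    have hst := hstar (x (N+1))
    linarith
  refine ⟨part1, ?_, ?_⟩
  all_goals {
    have hann : ∀ k, 0 ≤ D (x k) (y k) + D (y k) (x (k+1)) := fun k =>
      add_nonneg (hDnn _ _) (hDnn _ _)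
    have hbound : ∀ m : ℕ, ∑ k ∈ Finset.range m, (D (x k) (y k) + D (y k) (x (k+1)))
        ≤ γ * ((f (x 0) + g (x 0)) - (f xstar + g xstar)) := by
      intro m
      rcases Nat.eq_zero_or_pos m with hm | hm
      · subst hm
        simp only [Finset.range_zero, Finset.sum_empty]
        have := hstar (x 0)
        have : (0:ℝ) ≤ (f (x 0) + g (x 0)) - (f xstar + g xstar) := by linarith
        exact mul_nonneg hγ0.le this
      · obtain ⟨N, rfl⟩ := Nat.exists_eq_add_of_le hm
        have hp := part1 N
        have h2 : ∑ k ∈ Finset.range (1 + N), (D (x k) (y k) + D (y k) (x (k+1)))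
            = ∑ k ∈ Finset.range (N + 1), (D (x k) (y k) + D (y k) (x (k+1))) := by
          rw [add_comm]
        rw [h2]
        have h3 : (1/γ) * ∑ k ∈ Finset.range (N+1), (D (x k) (y k) + D (y k) (x (k+1)))
            ≤ (f (x 0) + g (x 0)) - (f xstar + g xstar) := part1 N
        calc ∑ k ∈ Finset.range (N+1), (D (x k) (y k) + D (y k) (x (k+1)))
            = γ * ((1/γ) * ∑ k ∈ Finset.range (N+1), (D (x k) (y k) + D (y k) (x (k+1)))) := by
              field_simp
          _ ≤ γ * ((f (x 0) + g (x 0)) - (f xstar + g xstar)) :=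
              mul_le_mul_of_nonneg_left h3 hγ0.le
    have hsummable : Summable (fun k => D (x k) (y k) + D (y k) (x (k+1))) :=
      summable_of_sum_range_le hann hbound
    have htend := hsummable.tendsto_atTop_zero
    first
    | exact squeeze_zero (fun k => hDnn _ _)
        (fun k => by linarith [hDnn (y k) (x (k+1))]) htend
    | exact squeeze_zero (fun k => hDnn _ _)
        (fun k => by linarith [hDnn (x k) (y k)]) htend
  }
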